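/- Let G be a finite group and ω ∈ Z³(G,𝕋) a normalized 3-cocycle (ω(g,h,k) = 1 whenever any of g,h,k equals the identity). Define on A₂ = C(G) ⊗ B(ℓ²(G)) the maps θ₂(g) = d₂(g) ∘ θ'₂(g), where θ'₂(g) = λ_g ⊗ Ad(λ_G(g)) and d₂(g)(δ_k ⊗ e_{x,y}) = ω(x⁻¹,g,g⁻¹k)·conj(ω(y⁻¹,g,g⁻¹k))·(δ_k ⊗ e_{x,y}); and define unitaries u₂(g,h) = φ₁(u₁(g,h)) ∈ A₂ where u₁(g,h)(k) = ω(k⁻¹,g,h) and φ₁(f) = 1 ⊗ M_f. Then for all g, h ∈ G: θ₂(g) ∘ θ₂(h) = Ad(u₂(g,h)) ∘ θ₂(gh). -/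

import Mathlib

section
/- We model `A₂ = C(G) ⊗ B(ℓ²(G))` as functions `G → Matrix G G ℂ`, with basis
`δ_k ⊗ e_{x,y}` corresponding to the function supported at `k` with value the
matrix unit `e_{x,y}`. -/

variable {G : Type*} [Group G] [Fintype G] [DecidableEq G]

/-- The translation action `θ'₂(g) = λ_g ⊗ Ad(λ_G(g))`. -/
def theta2' (g : G) (F : G → Matrix G G ℂ) : G → Matrix G G ℂ :=
  fun k => Matrix.of fun x y => F (g⁻¹ * k) (g⁻¹ * x) (g⁻¹ * y)

/-- The diagonal perturbation `d₂(g)`, multiplying `δ_k ⊗ e_{x,y}` by the phase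
`ω(x⁻¹,g,g⁻¹k) · conj(ω(y⁻¹,g,g⁻¹k))`. -/
noncomputable def d2pert (ω : G → G → G → ℂ) (g : G) (F : G → Matrix G G ℂ) :
    G → Matrix G G ℂ :=
  fun k => Matrix.of fun x y =>
    ω x⁻¹ g (g⁻¹ * k) * (starRingEnd ℂ) (ω y⁻¹ g (g⁻¹ * k)) * F k x y

/-- The perturbed maps `θ₂(g) = d₂(g) ∘ θ'₂(g)`. -/
noncomputable def theta2 (ω : G → G → G → ℂ) (g : G) (F : G → Matrix G G ℂ) :
    G → Matrix G G ℂ :=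
  d2pert ω g (theta2' g F)

/-- The unitaries `u₂(g,h) = φ₁(u₁(g,h)) = 1 ⊗ M_{u₁(g,h)}`, where
`u₁(g,h)(k) = ω(k⁻¹,g,h)`. -/
noncomputable def u2 (ω : G → G → G → ℂ) (g h : G) : G → Matrix G G ℂ :=
  fun _k => Matrix.of fun x y => if x = y then ω x⁻¹ g h else 0

/-- for a normalized circle-valued 3-cocycle `ω`, the perturbed maps
`θ₂(g) = d₂(g) ∘ θ'₂(g)` on `A₂ = C(G) ⊗ B(ℓ²(G))` satisfy the cocycle-action
relation `θ₂(g) ∘ θ₂(h) = Ad(u₂(g,h)) ∘ θ₂(gh)`. -/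
theorem stmt16 (ω : G → G → G → ℂ)
    (hnorm : ∀ g h k, ‖ω g h k‖ = 1)
    (hcoc : ∀ g h k l,
      ω h k l * ω g (h * k) l * ω g h k = ω (g * h) k l * ω g h (k * l))
    (hnormalized : ∀ g h k, g = 1 ∨ h = 1 ∨ k = 1 → ω g h k = 1) :
    ∀ (g h : G) (F : G → Matrix G G ℂ),
      theta2 ω g (theta2 ω h F) =
        u2 ω g h * theta2 ω (g * h) F * star (u2 ω g h) := by
  intro g h F
  have hu : u2 ω g h = fun _ => Matrix.diagonal (fun x => ω x⁻¹ g h) := rfl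
  funext k
  set l : G := h⁻¹ * (g⁻¹ * k) with hl
  have key : ∀ x : G,
      ω x⁻¹ g (g⁻¹ * k) * ω (x⁻¹ * g) h l =
        ω g h l * ω x⁻¹ (g * h) l * ω x⁻¹ g h := by
    intro x
    have := hcoc x⁻¹ g h l
    have hhl : h * l = g⁻¹ * k := by rw [hl]; group
    rw [hhl] at this
    rw [mul_comm]; exact this.symm
  have unit : ω g h l * (starRingEnd ℂ) (ω g h l) = 1 := by
    rw [Complex.mul_conj, Complex.normSq_eq_norm_sq]
    norm_cast
    rw [hnorm]
    norm_num
  ext x y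
  simp only [hu, theta2, d2pert, theta2', Matrix.of_apply, Pi.mul_apply, Pi.star_apply,
    Matrix.star_eq_conjTranspose, Matrix.diagonal_conjTranspose,
    Matrix.diagonal_mul, Matrix.mul_diagonal, Pi.star_apply, RCLike.star_def]
  have e1 : (g * h)⁻¹ * k = l := by rw [hl]; group
  have e2 : (g * h)⁻¹ * x = h⁻¹ * (g⁻¹ * x) := by group
  have e3 : (g * h)⁻¹ * y = h⁻¹ * (g⁻¹ * y) := by group
  have hxg : (g⁻¹ * x)⁻¹ = x⁻¹ * g := by group
  have hyg : (g⁻¹ * y)⁻¹ = y⁻¹ * g := by group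
  rw [e1, e2, e3, hxg, hyg]
  have hx := key x
  have hy := key y
  set A := ω x⁻¹ g (g⁻¹ * k)
  set Ay := ω y⁻¹ g (g⁻¹ * k)
  set B := ω (x⁻¹ * g) h l
  set By := ω (y⁻¹ * g) h l
  set W := ω g h l
  set X := ω x⁻¹ (g * h) l
  set Xy := ω y⁻¹ (g * h) l
  set P := ω x⁻¹ g h
  set Py := ω y⁻¹ g h
  set Fv := F l (h⁻¹ * (g⁻¹ * x)) (h⁻¹ * (g⁻¹ * y))
  calc A * (starRingEnd ℂ) Ay * (B * (starRingEnd ℂ) By * Fv)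
      = (A * B) * (starRingEnd ℂ) (Ay * By) * Fv := by rw [map_mul]; ring
    _ = (W * X * P) * (starRingEnd ℂ) (W * Xy * Py) * Fv := by rw [hx, hy]
    _ = (W * (starRingEnd ℂ) W) *
        (P * (X * (starRingEnd ℂ) Xy * Fv) * (starRingEnd ℂ) Py) := by
        rw [map_mul, map_mul]; ring
    _ = P * (X * (starRingEnd ℂ) Xy * Fv) * (starRingEnd ℂ) Py := by
        rw [unit, one_mul]

end
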